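/- In the RURV setting (exact arithmetic), suppose additionally that A has rank exactly r (equivalently σ_r > 0 and σ_{r+1} = 0) and that the leading r×r block X₁₁ = X(1:r,1:r) of X = Qᵀ·Vᵀ is invertible. Then the column space of A equals the span of the first r columns of U; that is, the range of the linear map x ↦ A·x equals the span of the vectors U(:,1), …, U(:,r). -/
import Mathlib


open Matrix

section Aux

variable {n : ℕ}

/-- Membership in the span of the first `r` standard basis vectors. -/
lemma aux_mem_span_singles {r : ℕ} (h : r ≤ n) (w : Fin n → ℝ)
    (hw : ∀ i : Fin n, r ≤ (i : ℕ) → w i = 0) :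
    w ∈ Submodule.span ℝ
      (Set.range fun i : Fin r => (Pi.single (Fin.castLE h i) 1 : Fin n → ℝ)) := by
  classical
  have hrepr : w = ∑ i : Fin r, w (Fin.castLE h i) • (Pi.single (Fin.castLE h i) 1 : Fin n → ℝ) := by
    funext j
    rw [Finset.sum_apply]
    by_cases hj : (j : ℕ) < r
    · rw [Finset.sum_eq_single (⟨(j : ℕ), hj⟩ : Fin r)]
      · simp [Fin.castLE, Fin.ext_iff]
      · intro b _ hb
        have : Fin.castLE h b ≠ j := by
          simp [Fin.ext_iff] at hb ⊢
          omega
        simp [Pi.single_apply, this]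
      · simp
    · rw [hw j (by omega)]
      refine (Finset.sum_eq_zero ?_).symm
      intro b _
      have : Fin.castLE h b ≠ j := by
        simp [Fin.ext_iff]
        omega
      simp [Pi.single_apply, this]
  rw [hrepr]
  exact Submodule.sum_mem _ fun i _ =>
    Submodule.smul_mem _ _ (Submodule.subset_span ⟨i, rfl⟩)

end Aux

/-- RURV, exact arithmetic: with `A = P·Σ·Qᵀ` an SVD, `V` orthogonal,
`X = Qᵀ·Vᵀ`, and `A·Vᵀ = U·R` a QR decomposition, if `A` has rank exactly `r`
(equivalently `σ_r > 0` and `σ_{r+1} = 0`) and the leading `r×r` block of `X` is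
invertible, then the column space of `A` equals the span of the first `r`
columns of `U`. -/
theorem rurv_rank_revealing_column_space {n : ℕ} (r : ℕ) (hr1 : 1 ≤ r) (hrn : r < n)
    (A P Q V U R : Matrix (Fin n) (Fin n) ℝ) (σ : Fin n → ℝ)
    (hP : Pᵀ * P = 1) (hQ : Qᵀ * Q = 1) (hV : Vᵀ * V = 1) (hU : Uᵀ * U = 1)
    (hσdec : Antitone σ) (hσ0 : ∀ i, 0 ≤ σ i)
    (hA : A = P * diagonal σ * Qᵀ)
    (hRtri : R.BlockTriangular id)
    (hQR : A * Vᵀ = U * R)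
    (hσr : 0 < σ ⟨r - 1, by omega⟩) (hσr1 : σ ⟨r, hrn⟩ = 0)
    (hX11 : IsUnit ((Qᵀ * Vᵀ).submatrix (Fin.castLE hrn.le) (Fin.castLE hrn.le))) :
    LinearMap.range A.mulVecLin =
      Submodule.span ℝ
        (Set.range fun i : Fin r => fun j : Fin n => U j (Fin.castLE hrn.le i)) := by
  classical
  set ι : Fin r → Fin n := Fin.castLE hrn.le with hι
  set e : Fin r → (Fin n → ℝ) := fun i => Pi.single (ι i) 1 with he
  set E : Submodule ℝ (Fin n → ℝ) := Submodule.span ℝ (Set.range e) with hE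
  set X : Matrix (Fin n) (Fin n) ℝ := Qᵀ * Vᵀ with hX
  -- basic σ facts
  have hσzero : ∀ i : Fin n, r ≤ (i : ℕ) → σ i = 0 := by
    intro i hi
    refine le_antisymm ?_ (hσ0 i)
    have : σ i ≤ σ ⟨r, hrn⟩ := hσdec (by simp [Fin.le_def]; omega)
    simpa [hσr1] using this
  have hσpos : ∀ i : Fin r, σ (ι i) ≠ 0 := by
    intro i
    have : σ ⟨r - 1, by omega⟩ ≤ σ (ι i) := hσdec (by simp [Fin.le_def, hι, Fin.castLE]; omega)
    have := lt_of_lt_of_le hσr this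
    exact ne_of_gt this
  -- orthogonality / invertibility facts
  have hQQ : Q * Qᵀ = 1 := mul_eq_one_comm.mp hQ
  have hVV : V * Vᵀ = 1 := mul_eq_one_comm.mp hV
  have hXX : Xᵀ * X = 1 := by
    rw [hX, Matrix.transpose_mul, Matrix.transpose_transpose, Matrix.transpose_transpose,
      Matrix.mul_assoc, ← Matrix.mul_assoc Q, hQQ, Matrix.one_mul, hVV]
  have hXX' : X * Xᵀ = 1 := mul_eq_one_comm.mp hXX
  -- surjectivity of invertible matrices
  have hsurj : ∀ (M N : Matrix (Fin n) (Fin n) ℝ), M * N = 1 →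
      Function.Surjective M.mulVecLin := by
    intro M N hMN y
    exact ⟨N.mulVec y, by simp [Matrix.mulVecLin_apply, Matrix.mulVec_mulVec, hMN]⟩
  -- range of (diagonal σ * X) is E
  have hrangeDX : LinearMap.range (diagonal σ * X).mulVecLin = E := by
    rw [Matrix.mulVecLin_mul, LinearMap.range_comp,
      LinearMap.range_eq_top.mpr (hsurj X Xᵀ hXX'), Submodule.map_top]
    apply le_antisymm
    · rintro w ⟨v, rfl⟩
      apply aux_mem_span_singles hrn.le
      intro i hi
      simp [Matrix.mulVecLin_apply, Matrix.mulVec_diagonal, hσzero i hi]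
    · rw [hE, Submodule.span_le]
      rintro w ⟨i, rfl⟩
      refine ⟨Pi.single (ι i) (σ (ι i))⁻¹, ?_⟩
      rw [Matrix.mulVecLin_apply, Matrix.diagonal_mulVec_single, mul_inv_cancel₀ (hσpos i)]
  -- range A = map P E
  have hAV : A * Vᵀ = P * (diagonal σ * X) := by
    rw [hA, hX, Matrix.mul_assoc, Matrix.mul_assoc]
  have hrangeA : LinearMap.range A.mulVecLin = Submodule.map P.mulVecLin E := by
    have h1 : LinearMap.range A.mulVecLin = LinearMap.range (A * Vᵀ).mulVecLin := by
      rw [Matrix.mulVecLin_mul, LinearMap.range_comp,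
        LinearMap.range_eq_top.mpr (hsurj Vᵀ V hV), Submodule.map_top]
    rw [h1, hAV, Matrix.mulVecLin_mul, LinearMap.range_comp, hrangeDX]
  -- RHS = map U E
  have hRHS : Submodule.span ℝ
      (Set.range fun i : Fin r => fun j : Fin n => U j (Fin.castLE hrn.le i)) =
      Submodule.map U.mulVecLin E := by
    have hfun : (⇑U.mulVecLin ∘ e) = fun i : Fin r => fun j : Fin n => U j (Fin.castLE hrn.le i) := by
      funext i j
      simp [he, Matrix.mulVecLin_apply, Matrix.mulVec_single, hι]
    rw [hE, Submodule.map_span, ← Set.range_comp, hfun]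
  -- the invertible r×r matrix M = D * X₁₁
  set M : Matrix (Fin r) (Fin r) ℝ := fun a b => σ (ι a) * X (ι a) (ι b) with hM
  have hMunit : IsUnit M := by
    have hDunit : IsUnit (diagonal fun i : Fin r => σ (ι i)) := by
      rw [Matrix.isUnit_iff_isUnit_det, Matrix.det_diagonal]
      exact isUnit_iff_ne_zero.mpr (Finset.prod_ne_zero_iff.mpr fun i _ => hσpos i)
    have : M = diagonal (fun i : Fin r => σ (ι i)) * X.submatrix ι ι := by
      funext a b
      simp [hM, Matrix.mul_apply, Matrix.diagonal_apply, Finset.sum_ite_eq]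
    rw [this]
    exact hDunit.mul hX11
  obtain ⟨Mu, hMu⟩ := hMunit
  set N : Matrix (Fin r) (Fin r) ℝ := (↑Mu⁻¹ : Matrix (Fin r) (Fin r) ℝ) with hN
  have hMN : M * N = 1 := by rw [hN, ← hMu]; exact Mu.mul_inv
  -- key identity: e i = ∑ j, N j i • (diagonal σ * X).mulVec (e j)
  have hkey : ∀ i : Fin r,
      e i = ∑ j : Fin r, N j i • (diagonal σ * X).mulVec (e j) := by
    intro i
    funext k
    rw [Finset.sum_apply]
    simp only [Pi.smul_apply]
    have hcol : ∀ j : Fin r, ((diagonal σ * X).mulVec (e j)) k = σ k * X k (ι j) := by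
      intro j
      simp [he, Matrix.mulVec_single, Matrix.mul_apply, Matrix.diagonal_apply,
        Finset.sum_ite_eq]
    by_cases hk : (k : ℕ) < r
    · have hkι : k = ι ⟨(k : ℕ), hk⟩ := by simp [hι, Fin.ext_iff]
      have : ∑ j : Fin r, N j i • ((diagonal σ * X).mulVec (e j)) k
          = (M * N) ⟨(k : ℕ), hk⟩ i := by
        rw [Matrix.mul_apply]
        apply Finset.sum_congr rfl
        intro j _
        have hιk : ι ⟨(k : ℕ), hk⟩ = k := Fin.ext rfl
        rw [hcol j, smul_eq_mul]
        simp only [hM, hιk]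
        ring
      rw [this, hMN]
      simp [he, Pi.single_apply, Matrix.one_apply, hι, Fin.ext_iff, eq_comm]
    · have h1 : (e i) k = 0 := by
        simp only [he]
        have : ι i ≠ k := by simp [hι, Fin.ext_iff]; omega
        simp [Pi.single_apply, this.symm]
      rw [h1]
      refine (Finset.sum_eq_zero ?_).symm
      intro j _
      rw [hcol j, hσzero k (by omega)]
      simp
  -- map P E ≤ map U E
  have hle : Submodule.map P.mulVecLin E ≤ Submodule.map U.mulVecLin E := by
    rw [hE, Submodule.map_span, Submodule.span_le]
    rintro w ⟨w', ⟨i, rfl⟩, rfl⟩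
    have hPe : P.mulVecLin (e i) = ∑ j : Fin r, N j i • (U * R).mulVec (e j) := by
      conv_lhs => rw [hkey i]
      rw [_root_.map_sum]
      apply Finset.sum_congr rfl
      intro j _
      rw [LinearMap.map_smul]
      congr 1
      rw [Matrix.mulVecLin_apply, Matrix.mulVec_mulVec, ← hAV, hQR]
    rw [hPe]
    refine Submodule.sum_mem _ fun j _ => Submodule.smul_mem _ _ ?_
    refine Submodule.mem_map.mpr ⟨R.mulVec (e j), ?_, ?_⟩
    · refine aux_mem_span_singles hrn.le _ ?_
      intro i hi
      have hRij : R i (ι j) = 0 := by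
        apply hRtri
        simp only [id]
        rw [Fin.lt_def]
        have : ((ι j : Fin n) : ℕ) < r := by simp [hι]
        omega
      simp [he, Matrix.mulVec_single, hRij]
    · rw [Matrix.mulVecLin_apply, Matrix.mulVec_mulVec]
  -- finrank facts
  have hfinE : Module.finrank ℝ E = r := by
    have hli : LinearIndependent ℝ e := by
      have heq : e = (fun i : Fin n => (Pi.single i 1 : Fin n → ℝ)) ∘ ι := rfl
      rw [heq]
      apply LinearIndependent.comp _ ι (Fin.castLE_injective hrn.le)
      have hb := (Pi.basisFun ℝ (Fin n)).linearIndependent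
      have : ⇑(Pi.basisFun ℝ (Fin n)) = fun i : Fin n => (Pi.single i 1 : Fin n → ℝ) := by
        funext i
        exact Pi.basisFun_apply ℝ (Fin n) i
      rwa [this] at hb
    rw [hE, finrank_span_eq_card hli, Fintype.card_fin]
  have hmapfr : ∀ (W : Matrix (Fin n) (Fin n) ℝ), Wᵀ * W = 1 →
      Module.finrank ℝ (Submodule.map W.mulVecLin E) = r := by
    intro W hW
    refine le_antisymm (hfinE ▸ Submodule.finrank_map_le _ _) ?_
    have h2 : Submodule.map Wᵀ.mulVecLin (Submodule.map W.mulVecLin E) = E := by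
      rw [← Submodule.map_comp, ← Matrix.mulVecLin_mul, hW, Matrix.mulVecLin_one,
        Submodule.map_id]
    calc r = Module.finrank ℝ E := hfinE.symm
      _ = Module.finrank ℝ (Submodule.map Wᵀ.mulVecLin (Submodule.map W.mulVecLin E)) := by
          rw [h2]
      _ ≤ Module.finrank ℝ (Submodule.map W.mulVecLin E) := Submodule.finrank_map_le _ _
  rw [hrangeA, hRHS]
  exact Submodule.eq_of_le_of_finrank_le hle (by rw [hmapfr U hU, hmapfr P hP])
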